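/- arXiv:1912.13062 — 8 statements merged into one kernel-verified Lean document; each statement's English description precedes it below -/
import Mathlib

section
/- Let λ > 1 and 0 < α < 1 be real numbers. Let (q_n)_{n≥0} be a sequence of reals with 0 ≤ q_n ≤ 1 for all n, and let (x_n)_{n≥0} be a sequence of nonnegative reals satisfying x_0 = α and x_{n+1} = α + λ·(x_n − 1 + q_n) for all n ≥ 0. Then ∑_{i=0}^{∞} λ^{−i} q_i ≥ λ(1−α)/(λ−1), i.e., G(α) − F(α) ≥ 0. -/
open Filter Finset

/-- First part of the dichotomy lemma: if the expected-arrival sequence `x`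
satisfies the parking recursion and stays nonnegative, then
`G(α) = ∑_{i≥0} λ^{-i} q i ≥ λ(1-α)/(λ-1) = F(α)`. -/
theorem stmt_2 (lam α : ℝ) (hlam : 1 < lam) (hα0 : 0 < α) (hα1 : α < 1)
    (q x : ℕ → ℝ)
    (hq : ∀ n : ℕ, 0 ≤ q n ∧ q n ≤ 1)
    (hxnonneg : ∀ n : ℕ, 0 ≤ x n)
    (hx0 : x 0 = α) (hrec : ∀ n : ℕ, x (n + 1) = α + lam * (x n - 1 + q n)) :
    lam * (1 - α) / (lam - 1) ≤ ∑' i : ℕ, lam ^ (-(i : ℤ)) * q i := by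
  have hlam0 : 0 < lam := lt_trans one_pos hlam
  set r : ℝ := lam⁻¹ with hr
  have hr0 : 0 < r := inv_pos.mpr hlam0
  have hr1 : r < 1 := by
    rw [hr]
    exact inv_lt_one_of_one_lt₀ hlam
  have hpow : ∀ i : ℕ, lam ^ (-(i : ℤ)) = r ^ i := by
    intro i
    rw [zpow_neg, zpow_natCast, hr, inv_pow]
  have hsum : Summable (fun i => r ^ i * q i) := by
    apply Summable.of_nonneg_of_le
      (fun i => mul_nonneg (pow_nonneg hr0.le i) (hq i).1)
      (fun i => by
        have := (hq i).2
        have hp := pow_nonneg hr0.le i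
        nlinarith)
      (summable_geometric_of_lt_one hr0.le hr1)
  have hrl : lam * r = 1 := mul_inv_cancel₀ hlam0.ne'
  have key : ∀ N, ∑ n ∈ Finset.range N, r ^ n * q n
      = x N * r ^ N - α * ∑ k ∈ Finset.range (N + 1), r ^ k
        + ∑ n ∈ Finset.range N, r ^ n := by
    intro N
    induction N with
    | zero => simp [hx0]
    | succ N ih =>
      rw [Finset.sum_range_succ, ih, hrec N,
        Finset.sum_range_succ (fun k => r ^ k) (N + 1),
        Finset.sum_range_succ (fun n => r ^ n) N]
      linear_combination (-(x N + q N - 1) * r ^ N) * hrl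
  have hineq : ∀ N, (∑ n ∈ Finset.range N, r ^ n)
      - α * ∑ k ∈ Finset.range (N + 1), r ^ k
      ≤ ∑ n ∈ Finset.range N, r ^ n * q n := by
    intro N
    rw [key N]
    have := mul_nonneg (hxnonneg N) (pow_nonneg hr0.le N)
    linarith
  have hT : Tendsto (fun N => ∑ n ∈ Finset.range N, r ^ n) atTop
      (nhds (1 - r)⁻¹) :=
    (hasSum_geometric_of_lt_one hr0.le hr1).tendsto_sum_nat
  have hT' : Tendsto (fun N => ∑ k ∈ Finset.range (N + 1), r ^ k) atTop
      (nhds (1 - r)⁻¹) := hT.comp (tendsto_add_atTop_nat 1)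
  have hg : Tendsto (fun N => (∑ n ∈ Finset.range N, r ^ n)
      - α * ∑ k ∈ Finset.range (N + 1), r ^ k) atTop
      (nhds ((1 - r)⁻¹ - α * (1 - r)⁻¹)) := hT.sub (hT'.const_mul α)
  have hS : Tendsto (fun N => ∑ n ∈ Finset.range N, r ^ n * q n) atTop
      (nhds (∑' i : ℕ, r ^ i * q i)) := hsum.hasSum.tendsto_sum_nat
  have hle : (1 - r)⁻¹ - α * (1 - r)⁻¹ ≤ ∑' i : ℕ, r ^ i * q i :=
    le_of_tendsto_of_tendsto' hg hS hineq
  have heq : (∑' i : ℕ, lam ^ (-(i : ℤ)) * q i) = ∑' i : ℕ, r ^ i * q i :=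
    tsum_congr (fun i => by rw [hpow i])
  rw [heq]
  have h1r : (0:ℝ) < 1 - r := by linarith
  have : lam * (1 - α) / (lam - 1) = (1 - r)⁻¹ - α * (1 - r)⁻¹ := by
    rw [hr]
    field_simp
  linarith [hle, this.le, this.ge]
end

section
/- Let λ > 1 and 0 < α < 1 be real numbers. Let (q_n)_{n≥0} be a sequence of reals with 0 ≤ q_n ≤ 1 for all n, and let (x_n)_{n≥0} be a sequence of reals satisfying x_0 = α and x_{n+1} = α + λ·(x_n − 1 + q_n) for all n ≥ 0. If ∑_{i=0}^{∞} λ^{−i} q_i > λ(1−α)/(λ−1), then there exist δ > 0 and N ∈ ℕ such that x_n ≥ δ·λ^n for all n ≥ N; in particular x_n → ∞ as n → ∞. -/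
/-- The other direction of the finiteness criterion: if `G(α) > F(α)`, then the
sequence `x` eventually grows at least like `δ λ^n` for some `δ > 0`, and in
particular `x n → ∞`. -/
theorem stmt_4 (lam α : ℝ) (hlam : 1 < lam) (hα0 : 0 < α) (hα1 : α < 1)
    (q x : ℕ → ℝ)
    (hq : ∀ n : ℕ, 0 ≤ q n ∧ q n ≤ 1)
    (hx0 : x 0 = α) (hrec : ∀ n : ℕ, x (n + 1) = α + lam * (x n - 1 + q n))
    (hGF : lam * (1 - α) / (lam - 1) < ∑' i : ℕ, lam ^ (-(i : ℤ)) * q i) :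
    (∃ δ : ℝ, 0 < δ ∧ ∃ N : ℕ, ∀ n : ℕ, N ≤ n → δ * lam ^ n ≤ x n) ∧
      Filter.Tendsto x Filter.atTop Filter.atTop := by
  have hlam0 : (0:ℝ) < lam := lt_trans one_pos hlam
  set r := lam⁻¹ with hr
  have hr0 : 0 < r := inv_pos.mpr hlam0
  have hr1 : r < 1 := inv_lt_one_of_one_lt₀ hlam
  have hkey : ∀ m : ℕ, lam ^ m * r ^ m = 1 := by
    intro m
    rw [← mul_pow, mul_inv_cancel₀ hlam0.ne', one_pow]
  have hzpow : ∀ i : ℕ, lam ^ (-(i:ℤ)) = r ^ i := by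
    intro i
    rw [zpow_neg, zpow_natCast, ← inv_pow]
  -- the q-series
  have hgs : Summable (fun i : ℕ => r ^ i * q i) := by
    apply Summable.of_nonneg_of_le
      (fun i => mul_nonneg (pow_nonneg hr0.le i) (hq i).1)
      (fun i => ?_) (summable_geometric_of_lt_one hr0.le hr1)
    calc r ^ i * q i ≤ r ^ i * 1 := by
          exact mul_le_mul_of_nonneg_left (hq i).2 (pow_nonneg hr0.le i)
      _ = r ^ i := mul_one _
  set S := ∑' i : ℕ, r ^ i * q i with hS
  have hGF' : lam * (1 - α) / (lam - 1) < S := by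
    rw [hS]
    have : (∑' i : ℕ, lam ^ (-(i:ℤ)) * q i) = ∑' i : ℕ, r ^ i * q i :=
      tsum_congr fun i => by rw [hzpow i]
    linarith [hGF, this.symm ▸ hGF]
  -- the term sequence
  set term : ℕ → ℝ := fun k => ((α - lam) * r) * r ^ k + r ^ k * q k with hterm
  have hgeo : Summable (fun k : ℕ => r ^ k) := summable_geometric_of_lt_one hr0.le hr1
  have hts : Summable term := ((hgeo.mul_left _).add hgs)
  -- closed form
  have hclosed : ∀ n : ℕ, x n = lam ^ n * (α + ∑ k ∈ Finset.range n, term k) := by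
    intro n
    induction n with
    | zero => simp [hx0]
    | succ n ih =>
      rw [hrec n, ih, Finset.sum_range_succ, hterm]
      have h1 : lam ^ (n+1) * (((α - lam) * r) * r ^ n) = α - lam := by
        have : lam ^ (n+1) * r ^ (n+1) = 1 := hkey (n+1)
        calc lam ^ (n+1) * (((α - lam) * r) * r ^ n)
            = (α - lam) * (lam ^ (n+1) * r ^ (n+1)) := by ring
          _ = α - lam := by rw [this]; ring
      have h2 : lam ^ (n+1) * (r ^ n * q n) = lam * q n := by
        have : lam ^ n * r ^ n = 1 := hkey n
        calc lam ^ (n+1) * (r ^ n * q n) = lam * (lam ^ n * r ^ n) * q n := by ring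
          _ = lam * q n := by rw [this]; ring
      have expand : lam ^ (n+1) * (α + (∑ k ∈ Finset.range n, term k +
          (((α - lam) * r) * r ^ n + r ^ n * q n)))
          = lam ^ (n+1) * (α + ∑ k ∈ Finset.range n, term k)
            + lam ^ (n+1) * (((α - lam) * r) * r ^ n)
            + lam ^ (n+1) * (r ^ n * q n) := by ring
      rw [expand, h1, h2, pow_succ]
      ring
  -- limit
  set L : ℝ := α + ∑' k, term k with hL
  have hyL : Filter.Tendsto (fun n => α + ∑ k ∈ Finset.range n, term k)
      Filter.atTop (nhds L) := by
    exact Filter.Tendsto.const_add α hts.hasSum.tendsto_sum_nat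
  have hsum_term : ∑' k, term k = ((α - lam) * r) * (1 - r)⁻¹ + S := by
    rw [hterm, Summable.tsum_add (hgeo.mul_left _) hgs, tsum_mul_left,
      tsum_geometric_of_lt_one hr0.le hr1, hS]
  have hLval : L = S - lam * (1 - α) / (lam - 1) := by
    rw [hL, hsum_term]
    have h1r : (1 : ℝ) - r ≠ 0 := by
      have : 1 - r > 0 := by linarith
      linarith
    have hlam1 : lam - 1 ≠ 0 := by linarith
    rw [hr]
    field_simp
    ring
  have hLpos : 0 < L := by rw [hLval]; linarith
  -- eventually y n ≥ L/2
  have hev : ∀ᶠ n in Filter.atTop,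
      L / 2 < α + ∑ k ∈ Finset.range n, term k :=
    hyL.eventually (eventually_gt_nhds (half_lt_self hLpos))
  obtain ⟨N, hN⟩ := Filter.eventually_atTop.mp hev
  have hbound : ∀ n : ℕ, N ≤ n → L / 2 * lam ^ n ≤ x n := by
    intro n hn
    rw [hclosed n, mul_comm]
    exact mul_le_mul_of_nonneg_left (hN n hn).le (pow_nonneg hlam0.le n)
  have hδ : 0 < L / 2 := half_pos hLpos
  refine ⟨⟨L / 2, hδ, N, hbound⟩, ?_⟩
  have hpow : Filter.Tendsto (fun n : ℕ => L / 2 * lam ^ n) Filter.atTop Filter.atTop :=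
    (tendsto_pow_atTop_atTop_of_one_lt hlam).const_mul_atTop hδ
  exact Filter.tendsto_atTop_mono' _ (Filter.eventually_atTop.mpr ⟨N, hbound⟩) hpow
end

section
/- Let A ⊆ ℝ and let f : ℝ → ℕ → ℝ satisfy, for every α ∈ A: f(α, k) ≥ 0 for all k, ∑_{k=0}^{∞} f(α, k) = 1, and ∑_{k=0}^{∞} k·f(α, k) = α. Assume the family is stochastically increasing: for all α, α' ∈ A with α ≤ α' and every m ∈ ℕ, ∑_{k=m+1}^{∞} f(α, k) ≤ ∑_{k=m+1}^{∞} f(α', k). Then for every k ∈ ℕ, the map α ↦ f(α, k) is continuous on A. -/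
private def e6 : (Σ j : ℕ, Fin j) ≃ ℕ × ℕ where
  toFun x := (x.2.val, x.1 - x.2.val - 1)
  invFun p := ⟨p.1 + p.2 + 1, ⟨p.1, by omega⟩⟩
  left_inv := by
    rintro ⟨j, i⟩
    have hi := i.isLt
    refine Sigma.ext (by simp; omega) ?_
    rw [Fin.heq_ext_iff (by simp; omega)]
  right_inv := by
    rintro ⟨m, k⟩
    simp
    omega

theorem tail_hasSum (A : Set ℝ) (f : ℝ → ℕ → ℝ)
    (hnonneg : ∀ α ∈ A, ∀ k : ℕ, 0 ≤ f α k)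
    (hprob : ∀ α ∈ A, HasSum (fun k : ℕ => f α k) 1)
    (hmean : ∀ α ∈ A, HasSum (fun k : ℕ => (k : ℝ) * f α k) α)
    {α : ℝ} (hα : α ∈ A) :
    HasSum (fun m : ℕ => ∑' k : ℕ, f α (k + m + 1)) α := by
  have hfsum : Summable (f α) := (hprob α hα).summable
  have htail : ∀ m : ℕ, Summable (fun k : ℕ => f α (k + m + 1)) := by
    intro m
    have := (summable_nat_add_iff (m + 1)).2 hfsum
    exact this.congr fun k => congrArg (f α) (by omega)
  set S : (Σ j : ℕ, Fin j) → ℝ := fun x => f α x.1 with hS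
  have hfiber : ∀ j : ℕ, HasSum (fun i : Fin j => S ⟨j, i⟩) ((j : ℝ) * f α j) := by
    intro j
    have := hasSum_fintype (fun _ : Fin j => f α j)
    simpa [Finset.sum_const, nsmul_eq_mul, hS] using this
  have hSsum : Summable S := by
    refine (summable_sigma_of_nonneg fun x => hnonneg α hα _).2 ⟨fun j => (hfiber j).summable, ?_⟩
    refine ((hmean α hα).summable).congr fun j => ?_
    exact ((hfiber j).tsum_eq).symm
  have hS_eq : HasSum S α := by
    have h1 := hSsum.hasSum
    have h2 := h1.sigma fun j => hfiber j
    have := h2.unique (hmean α hα)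
    rwa [this] at h1
  have hprodsum : HasSum (fun p : ℕ × ℕ => f α (p.1 + p.2 + 1)) α := by
    have h := (Equiv.hasSum_iff e6.symm).2 hS_eq
    have he : (S ∘ e6.symm) = fun p : ℕ × ℕ => f α (p.1 + p.2 + 1) := by
      funext p; rfl
    rwa [he] at h
  refine hprodsum.prod_fiberwise fun m => ?_
  rw [show (fun c : ℕ => f α ((m, c).1 + (m, c).2 + 1)) = fun k : ℕ => f α (k + m + 1) from
    funext fun k => congrArg (f α) (by omega)]
  exact (htail m).hasSum

/-- Continuity of point masses for a stochastically increasing family of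
probability mass functions on ℕ with mean `α`: if the tail sums
`∑_{k>m} f α k` are nondecreasing in `α` on `A`, then each point mass
`α ↦ f α k` is continuous on `A`. -/
theorem stmt_6 (A : Set ℝ) (f : ℝ → ℕ → ℝ)
    (hnonneg : ∀ α ∈ A, ∀ k : ℕ, 0 ≤ f α k)
    (hprob : ∀ α ∈ A, HasSum (fun k : ℕ => f α k) 1)
    (hmean : ∀ α ∈ A, HasSum (fun k : ℕ => (k : ℝ) * f α k) α)
    (hstoch : ∀ α ∈ A, ∀ α' ∈ A, α ≤ α' → ∀ m : ℕ,
        (∑' k : ℕ, f α (k + m + 1)) ≤ ∑' k : ℕ, f α' (k + m + 1)) :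
    ∀ k : ℕ, ContinuousOn (fun α => f α k) A := by
  set T : ℝ → ℕ → ℝ := fun α m => ∑' k : ℕ, f α (k + m + 1) with hTdef
  have htail : ∀ α ∈ A, ∀ m : ℕ, Summable (fun k : ℕ => f α (k + m + 1)) := by
    intro α hα m
    have := (summable_nat_add_iff (m + 1)).2 (hprob α hα).summable
    exact this.congr fun k => congrArg (f α) (by omega)
  have key : ∀ α ∈ A, ∀ α' ∈ A, α ≤ α' → ∀ m : ℕ, T α' m - T α m ≤ α' - α := by
    intro α hα α' hα' hle m
    have h1 := tail_hasSum A f hnonneg hprob hmean hα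
    have h2 := tail_hasSum A f hnonneg hprob hmean hα'
    have hd : HasSum (fun m => T α' m - T α m) (α' - α) := h2.sub h1
    exact le_hasSum hd m fun j _ => sub_nonneg.2 (hstoch α hα α' hα' hle j)
  have hTlip : ∀ α ∈ A, ∀ α' ∈ A, ∀ m : ℕ, |T α m - T α' m| ≤ |α - α'| := by
    intro α hα α' hα' m
    rcases le_total α α' with h | h
    · have h1 := key α hα α' hα' h m
      have h2 := sub_nonneg.2 (hstoch α hα α' hα' h m)
      rw [abs_sub_comm, abs_of_nonneg h2, abs_sub_comm, abs_of_nonneg (by linarith)]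
      linarith
    · have h1 := key α' hα' α hα h m
      have h2 := sub_nonneg.2 (hstoch α' hα' α hα h m)
      rw [abs_of_nonneg h2, abs_of_nonneg (by linarith)]
      linarith
  have hrep : ∀ α ∈ A, ∀ k : ℕ,
      f α k = (if k = 0 then 1 else T α (k - 1)) - T α k := by
    intro α hα k
    cases k with
    | zero =>
      have h0 : (∑' n : ℕ, f α n) = f α 0 + ∑' n : ℕ, f α (n + 1) :=
        Summable.tsum_eq_zero_add (hprob α hα).summable
      have h1 : (∑' n : ℕ, f α (n + 1)) = T α 0 := by
        exact tsum_congr fun n => congrArg (f α) (by omega)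
      rw [(hprob α hα).tsum_eq] at h0
      rw [if_pos rfl, ← h1]
      linarith
    | succ m =>
      have h0 : (∑' n : ℕ, f α (n + m + 1)) = f α (0 + m + 1) + ∑' n : ℕ, f α (n + 1 + m + 1) :=
        Summable.tsum_eq_zero_add (htail α hα m)
      rw [show (0 : ℕ) + m + 1 = m + 1 from by omega] at h0
      have h1 : (∑' n : ℕ, f α (n + 1 + m + 1)) = T α (m + 1) := by
        exact tsum_congr fun n => congrArg (f α) (by omega)
      rw [if_neg (Nat.succ_ne_zero m), Nat.add_sub_cancel]
      rw [h1] at h0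
      have : T α m = f α (m + 1) + T α (m + 1) := h0
      linarith
  intro k
  have hlip : LipschitzOnWith 2 (fun α => f α k) A := by
    refine LipschitzOnWith.of_dist_le_mul fun α hα α' hα' => ?_
    rw [Real.dist_eq, Real.dist_eq, hrep α hα k, hrep α' hα' k]
    have h1 := hTlip α hα α' hα' k
    cases k with
    | zero =>
      rw [if_pos rfl, if_pos rfl]
      have heq : (1 : ℝ) - T α 0 - (1 - T α' 0) = -(T α 0 - T α' 0) := by ring
      rw [heq, abs_neg]
      push_cast
      linarith [abs_nonneg (α - α')]
    | succ m =>
      rw [if_neg (Nat.succ_ne_zero m), if_neg (Nat.succ_ne_zero m), Nat.add_sub_cancel]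
      have h2 := hTlip α hα α' hα' m
      have h3 := abs_sub (T α m - T α' m) (T α (m+1) - T α' (m+1))
      push_cast
      calc |T α m - T α (m+1) - (T α' m - T α' (m+1))|
          = |(T α m - T α' m) - (T α (m+1) - T α' (m+1))| := by ring_nf
        _ ≤ |T α m - T α' m| + |T α (m+1) - T α' (m+1)| := abs_sub _ _
        _ ≤ 2 * |α - α'| := by linarith
  exact hlip.continuousOn
end

section
/- Let 0 < α < 1 be real and let ν be a probability mass function on ℕ (a PMF) with ν(1) = 0 and mean ∑_{k=0}^{∞} k·ν(k) = α. Then for every bounded nondecreasing function φ : ℝ → ℝ that is convex on [0, ∞), one has (1 − α/2)·φ(0) + (α/2)·φ(2) ≤ ∑_{k=0}^{∞} φ(k)·ν(k). -/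
open scoped ENNReal

/-- The Bernoulli-type distribution (value 2 with probability `α/2`, else 0) is
minimal in the increasing convex order among mean-`α` distributions on ℕ whose
support avoids 1: for any such PMF `ν` and any bounded nondecreasing `φ` convex
on `[0, ∞)`, `(1 - α/2) φ(0) + (α/2) φ(2) ≤ ∑_k φ(k) ν(k)`. -/
theorem stmt_12 (α : ℝ) (hα0 : 0 < α) (hα1 : α < 1) (ν : PMF ℕ)
    (hν1 : ν 1 = 0)
    (hmean : ∑' k : ℕ, (k : ℝ≥0∞) * ν k = ENNReal.ofReal α) :
    ∀ φ : ℝ → ℝ, (∃ C : ℝ, ∀ x : ℝ, |φ x| ≤ C) → Monotone φ →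
      ConvexOn ℝ (Set.Ici (0 : ℝ)) φ →
      (1 - α / 2) * φ 0 + (α / 2) * φ 2 ≤ ∑' k : ℕ, φ k * (ν k).toReal := by
  rintro φ ⟨C, hC⟩ hmono hconv
  have hν_ne_top : ∀ k, ν k ≠ ∞ := fun k => (ν.apply_lt_top k).ne
  set p : ℕ → ℝ := fun k => (ν k).toReal with hp
  have hp_nonneg : ∀ k, 0 ≤ p k := fun k => ENNReal.toReal_nonneg
  have hsum_p : Summable p := by
    apply ENNReal.summable_toReal
    rw [ν.tsum_coe]; exact ENNReal.one_ne_top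
  have htsum_p : ∑' k, p k = 1 := by
    rw [hp, ← ENNReal.tsum_toReal_eq hν_ne_top, ν.tsum_coe, ENNReal.toReal_one]
  have hterm_ne_top : ∀ k : ℕ, (k : ℝ≥0∞) * ν k ≠ ∞ :=
    fun k => ENNReal.mul_ne_top (ENNReal.natCast_ne_top k) (hν_ne_top k)
  have hsum_kp : Summable (fun k : ℕ => (k : ℝ) * p k) := by
    have h1 : (∑' k : ℕ, (k : ℝ≥0∞) * ν k) ≠ ∞ := by
      rw [hmean]; exact ENNReal.ofReal_ne_top
    have h2 := ENNReal.summable_toReal h1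
    refine h2.congr fun k => ?_
    simp [ENNReal.toReal_mul, hp]
  have htsum_kp : ∑' k : ℕ, (k : ℝ) * p k = α := by
    have h := congrArg ENNReal.toReal hmean
    rw [ENNReal.toReal_ofReal hα0.le, ENNReal.tsum_toReal_eq hterm_ne_top] at h
    rw [← h]
    refine tsum_congr fun k => ?_
    simp [ENNReal.toReal_mul, hp]
  set c : ℝ := φ 2 - φ 0 with hc
  have key : ∀ k : ℕ, φ 0 * p k + (c / 2) * ((k : ℝ) * p k) ≤ φ k * p k := by
    intro k
    rcases eq_or_ne (ν k) 0 with h0 | h0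
    · simp [hp, h0]
    · have hk1 : k ≠ 1 := by rintro rfl; exact h0 hν1
      rcases Nat.eq_zero_or_pos k with rfl | hkpos
      · simp
      · have hk2 : 2 ≤ k := by omega
        have hk2' : (2 : ℝ) ≤ (k : ℝ) := by exact_mod_cast hk2
        have hkpos' : (0 : ℝ) < (k : ℝ) := by linarith
        have hk0 : (k : ℝ) ≠ 0 := ne_of_gt hkpos'
        have ha : (0 : ℝ) ≤ 1 - 2 / (k : ℝ) := by
          rw [sub_nonneg, div_le_one hkpos']; exact hk2'
        have hb : (0 : ℝ) ≤ 2 / (k : ℝ) := by positivity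
        have hab : (1 - 2 / (k : ℝ)) + 2 / (k : ℝ) = 1 := by ring
        have h := hconv.2 (Set.mem_Ici.mpr le_rfl)
          (Set.mem_Ici.mpr hkpos'.le) ha hb hab
        simp only [smul_eq_mul, mul_zero, zero_add] at h
        rw [div_mul_cancel₀ 2 hk0] at h
        have h2 : (k : ℝ) * φ 2 ≤ ((k : ℝ) - 2) * φ 0 + 2 * φ k := by
          have hh := mul_le_mul_of_nonneg_left h hkpos'.le
          have heq : (k : ℝ) * ((1 - 2 / (k : ℝ)) * φ 0 + 2 / (k : ℝ) * φ k)
              = ((k : ℝ) - 2) * φ 0 + 2 * φ k := by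
            field_simp
          rw [heq] at hh
          exact hh
        have h3 : φ 0 + c / 2 * (k : ℝ) ≤ φ k := by rw [hc]; linarith
        have h4 := mul_le_mul_of_nonneg_right h3 (hp_nonneg k)
        calc φ 0 * p k + (c / 2) * ((k : ℝ) * p k)
            = (φ 0 + c / 2 * (k : ℝ)) * p k := by ring
          _ ≤ φ k * p k := h4
  have hsum_g : Summable (fun k : ℕ => φ 0 * p k + (c / 2) * ((k : ℝ) * p k)) :=
    (hsum_p.mul_left _).add (hsum_kp.mul_left _)
  have hsum_f : Summable (fun k : ℕ => φ k * p k) := by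
    refine Summable.of_norm_bounded (hsum_p.mul_left C) fun k => ?_
    rw [norm_mul, Real.norm_eq_abs, Real.norm_eq_abs, abs_of_nonneg (hp_nonneg k)]
    exact mul_le_mul_of_nonneg_right (hC _) (hp_nonneg k)
  have hle := Summable.tsum_le_tsum key hsum_g hsum_f
  rw [Summable.tsum_add (hsum_p.mul_left _) (hsum_kp.mul_left _), tsum_mul_left,
    tsum_mul_left, htsum_p, htsum_kp] at hle
  have : (1 - α / 2) * φ 0 + (α / 2) * φ 2 = φ 0 * 1 + c / 2 * α := by
    rw [hc]; ring
  rw [this]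
  exact hle
end

section
/- Let S : PMF ℕ → ℕ → PMF ℕ satisfy S ν 0 = pure 0 and S ν (z+1) = (S ν z).bind (fun t => ν.bind (fun x => pure (t + x))) for all ν and z. Let Z and η be PMFs on ℕ, set λ = ∑'_{z} z·Z(z) and α = ∑'_{k} k·η(k) in ℝ≥0∞, and define PMFs μ_n on ℕ by μ_0 = η and μ_{n+1} = η.bind (fun e => (Z.bind (fun z => S (μ_n.map (fun x => x − 1)) z)).bind (fun s => pure (e + s))), where x − 1 denotes truncated subtraction on ℕ. Then for every n ≥ 0, in ℝ≥0∞ (with truncated subtraction): ∑'_{k} k·μ_{n+1}(k) = α + λ·(∑'_{k} k·μ_n(k) − (1 − μ_n(0))). -/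
open scoped ENNReal

noncomputable def Ex (p : PMF ℕ) : ℝ≥0∞ := ∑' k : ℕ, (k : ℝ≥0∞) * p k

lemma Ex_pure (a : ℕ) : Ex (PMF.pure a) = a := by
  unfold Ex
  rw [tsum_eq_single a]
  · simp [PMF.pure_apply]
  · intro b hb; simp [PMF.pure_apply, hb]

lemma Ex_bind (p : PMF ℕ) (f : ℕ → PMF ℕ) :
    Ex (p.bind f) = ∑' a : ℕ, p a * Ex (f a) := by
  unfold Ex
  simp only [PMF.bind_apply]
  calc ∑' k : ℕ, (k : ℝ≥0∞) * ∑' a : ℕ, p a * (f a) k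
      = ∑' (k : ℕ) (a : ℕ), (k : ℝ≥0∞) * (p a * (f a) k) :=
        tsum_congr fun k => ENNReal.tsum_mul_left.symm
    _ = ∑' (a : ℕ) (k : ℕ), (k : ℝ≥0∞) * (p a * (f a) k) := ENNReal.tsum_comm
    _ = ∑' a : ℕ, p a * ∑' k : ℕ, (k : ℝ≥0∞) * (f a) k := by
        refine tsum_congr fun a => ?_
        rw [← ENNReal.tsum_mul_left]
        exact tsum_congr fun k => by ring

lemma Ex_map (p : PMF ℕ) (f : ℕ → ℕ) :
    Ex (p.map f) = ∑' a : ℕ, (f a : ℝ≥0∞) * p a := by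
  rw [PMF.map, Ex_bind]
  congr 1; ext a; simp only [Function.comp_apply]; rw [Ex_pure, mul_comm]

lemma Ex_add_shift (p : PMF ℕ) (e : ℕ) :
    Ex (p.bind (fun s => PMF.pure (e + s))) = e + Ex p := by
  rw [Ex_bind]
  have : ∀ a : ℕ, p a * Ex (PMF.pure (e + a)) = (e : ℝ≥0∞) * p a + a * p a := by
    intro a; rw [Ex_pure]; push_cast; ring
  simp only [this]
  rw [ENNReal.tsum_add, ENNReal.tsum_mul_left, p.tsum_coe, mul_one]
  rfl

lemma Ex_S (S : PMF ℕ → ℕ → PMF ℕ)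
    (hS0 : ∀ ν : PMF ℕ, S ν 0 = PMF.pure 0)
    (hSs : ∀ (ν : PMF ℕ) (z : ℕ),
      S ν (z + 1) = (S ν z).bind (fun t => ν.bind (fun x => PMF.pure (t + x))))
    (ν : PMF ℕ) : ∀ z : ℕ, Ex (S ν z) = z * Ex ν := by
  intro z
  induction z with
  | zero => rw [hS0, Ex_pure]; simp
  | succ z ih =>
      rw [hSs, Ex_bind]
      have : ∀ t : ℕ, (S ν z) t * Ex (ν.bind (fun x => PMF.pure (t + x)))
          = (t : ℝ≥0∞) * (S ν z) t + (S ν z) t * Ex ν := by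
        intro t
        have : Ex (ν.bind (fun x => PMF.pure (t + x))) = t + Ex ν := Ex_add_shift ν t
        rw [this]; ring
      simp only [this]
      rw [ENNReal.tsum_add, ENNReal.tsum_mul_right, (S ν z).tsum_coe, one_mul]
      have : (∑' t : ℕ, (t : ℝ≥0∞) * (S ν z) t) = Ex (S ν z) := rfl
      rw [this, ih]
      push_cast
      ring

lemma Ex_pred (p : PMF ℕ) :
    Ex (p.map (fun x => x - 1)) = Ex p - (1 - p 0) := by
  rw [Ex_map]
  set A : ℝ≥0∞ := ∑' x : ℕ, (if x = 0 then 0 else p x) with hA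
  have hA1 : (1 : ℝ≥0∞) = p 0 + A := by
    have h := ENNReal.tsum_eq_add_tsum_ite (f := fun x : ℕ => p x) 0
    rw [p.tsum_coe] at h
    rw [hA, h]
    congr 1
    exact tsum_congr fun x => by split_ifs <;> rfl
  have hAle : A ≤ 1 := hA1 ▸ le_add_self
  have hAne : A ≠ ∞ := (hAle.trans_lt ENNReal.one_lt_top).ne
  have hA2 : 1 - p 0 = A := by
    rw [hA1]
    exact ENNReal.add_sub_cancel_left (PMF.apply_ne_top p 0)
  have key : Ex p = (∑' a : ℕ, ((a - 1 : ℕ) : ℝ≥0∞) * p a) + A := by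
    unfold Ex
    rw [hA, ← ENNReal.tsum_add]
    congr 1
    ext a
    cases a with
    | zero => simp
    | succ b => simp [Nat.succ_sub_one, add_mul, add_comm]
  rw [hA2, key]
  exact (ENNReal.add_sub_cancel_right hAne).symm

/-- Expectation recursion for the parking process:
`E[X_{n+1}] = α + λ (E[X_n] - P(X_n > 0))`, stated in `ℝ≥0∞` for the laws
`μ n` of the number of cars arriving at the root by time `n`. -/
theorem stmt_14 (S : PMF ℕ → ℕ → PMF ℕ)
    (hS0 : ∀ ν : PMF ℕ, S ν 0 = PMF.pure 0)
    (hSs : ∀ (ν : PMF ℕ) (z : ℕ),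
      S ν (z + 1) = (S ν z).bind (fun t => ν.bind (fun x => PMF.pure (t + x))))
    (Z η : PMF ℕ) (lam α : ℝ≥0∞)
    (hlam : lam = ∑' z : ℕ, (z : ℝ≥0∞) * Z z)
    (hα : α = ∑' k : ℕ, (k : ℝ≥0∞) * η k)
    (μ : ℕ → PMF ℕ)
    (hμ0 : μ 0 = η)
    (hμs : ∀ n : ℕ, μ (n + 1) = η.bind (fun e =>
      (Z.bind (fun z => S ((μ n).map (fun x => x - 1)) z)).bind
        (fun s => PMF.pure (e + s)))) :
    ∀ n : ℕ, ∑' k : ℕ, (k : ℝ≥0∞) * (μ (n + 1)) k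
      = α + lam * ((∑' k : ℕ, (k : ℝ≥0∞) * (μ n) k) - (1 - (μ n) 0)) := by
  intro n
  have hE : ∀ p : PMF ℕ, (∑' k : ℕ, (k : ℝ≥0∞) * p k) = Ex p := fun _ => rfl
  rw [hE, hE, hμs n]
  set ν := (μ n).map (fun x => x - 1) with hν
  set B := Z.bind (fun z => S ν z) with hB
  have hEB : Ex B = lam * Ex ν := by
    rw [hB, Ex_bind, hlam]
    rw [← ENNReal.tsum_mul_right]
    congr 1; ext z
    rw [Ex_S S hS0 hSs ν z]; ring
  rw [Ex_bind]
  have h1 : ∀ e : ℕ, η e * Ex (B.bind (fun s => PMF.pure (e + s)))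
      = (e : ℝ≥0∞) * η e + η e * Ex B := by
    intro e
    rw [Ex_add_shift]
    ring
  simp only [h1]
  rw [ENNReal.tsum_add, ENNReal.tsum_mul_right, η.tsum_coe, one_mul, ← hα,
    hEB, hν, Ex_pred]
end

section
/- Let S : PMF ℕ → ℕ → PMF ℕ satisfy S ν 0 = pure 0 and S ν (z+1) = (S ν z).bind (fun t => ν.bind (fun x => pure (t + x))) for all ν and z. Let A ⊆ ℝ, let Z be a PMF on ℕ with ∑'_{z} z·Z(z) < ∞, and let η : ℝ → PMF ℕ be a family such that for every k ∈ ℕ the map α ↦ ((η α)(k)).toReal is continuous on A. For each α ∈ A define PMFs μ(α, n) on ℕ by μ(α, 0) = η(α) and μ(α, n+1) = (η α).bind (fun e => (Z.bind (fun z => S ((μ(α, n)).map (fun x => x − 1)) z)).bind (fun s => pure (e + s))), where x − 1 is truncated subtraction on ℕ. Then for every n ≥ 0, the map α ↦ ((μ(α, n))(0)).toReal is continuous on A. -/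
open scoped ENNReal

private lemma bind_add_apply (p q : PMF ℕ) (s : ℕ) :
    (p.bind fun t => q.bind fun x => PMF.pure (t + x)) s
      = ∑ t ∈ Finset.range (s + 1), p t * q (s - t) := by
  rw [PMF.bind_apply]
  rw [tsum_eq_sum (s := Finset.range (s + 1)) ?_]
  · refine Finset.sum_congr rfl fun t ht => ?_
    rw [Finset.mem_range, Nat.lt_succ_iff] at ht
    congr 1
    rw [PMF.bind_apply]
    rw [tsum_eq_single (s - t) ?_]
    · rw [PMF.pure_apply, if_pos (by omega), mul_one]
    · intro x hx
      rw [PMF.pure_apply, if_neg (by omega), mul_zero]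
  · intro t ht
    rw [Finset.mem_range, Nat.lt_succ_iff] at ht
    push_neg at ht
    have : (q.bind fun x => PMF.pure (t + x)) s = 0 := by
      rw [PMF.bind_apply]
      refine ENNReal.tsum_eq_zero.mpr fun x => ?_
      rw [PMF.pure_apply, if_neg (by omega), mul_zero]
    rw [this, mul_zero]

private lemma map_pred_apply (p : PMF ℕ) (k : ℕ) :
    (p.map (fun x => x - 1)) k
      = ∑ a ∈ Finset.range (k + 2),
          @ite _ (k = a - 1) (Classical.propDecidable _) (p a) 0 := by
  rw [PMF.map_apply]
  refine tsum_eq_sum (s := Finset.range (k + 2)) fun a ha => ?_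
  rw [Finset.mem_range] at ha
  push_neg at ha
  exact if_neg (by omega)

/-- Continuity of `q_n = P(X_n = 0)` in the arrival parameter: if the point
masses of the arrival distribution `η α` depend continuously on `α` on `A` and
the offspring distribution `Z` has finite mean, then for every `n` the map
`α ↦ (μ α n)(0)` is continuous on `A`, where `μ α n` is the law of the number
of cars arriving at the root by time `n`. -/
theorem stmt_16 (S : PMF ℕ → ℕ → PMF ℕ)
    (hS0 : ∀ ν : PMF ℕ, S ν 0 = PMF.pure 0)
    (hSs : ∀ (ν : PMF ℕ) (z : ℕ),
      S ν (z + 1) = (S ν z).bind (fun t => ν.bind (fun x => PMF.pure (t + x))))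
    (A : Set ℝ) (Z : PMF ℕ)
    (hZ : ∑' z : ℕ, (z : ℝ≥0∞) * Z z < ⊤)
    (η : ℝ → PMF ℕ)
    (hη : ∀ k : ℕ, ContinuousOn (fun α => ((η α) k).toReal) A)
    (μ : ℝ → ℕ → PMF ℕ)
    (hμ0 : ∀ α : ℝ, μ α 0 = η α)
    (hμs : ∀ (α : ℝ) (n : ℕ), μ α (n + 1) = (η α).bind (fun e =>
      (Z.bind (fun z => S ((μ α n).map (fun x => x - 1)) z)).bind
        (fun s => PMF.pure (e + s)))) :
    ∀ n : ℕ, ContinuousOn (fun α => ((μ α n) 0).toReal) A := by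
  -- stronger statement: continuity of every point mass
  suffices h : ∀ n k : ℕ, ContinuousOn (fun α => ((μ α n) k).toReal) A by
    exact fun n => h n 0
  intro n
  induction n with
  | zero => intro k; simpa only [hμ0] using hη k
  | succ n ih =>
    -- continuity of the point masses of ν α := (μ α n).map (· - 1)
    set ν : ℝ → PMF ℕ := fun α => (μ α n).map (fun x => x - 1) with hν
    have hνc : ∀ k : ℕ, ContinuousOn (fun α => ((ν α) k).toReal) A := by
      intro k
      have : ∀ α, ((ν α) k).toReal
          = ∑ a ∈ Finset.range (k + 2),
              @ite _ (k = a - 1) (Classical.propDecidable _) ((μ α n) a).toReal 0 := by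
        intro α
        rw [hν, map_pred_apply, ENNReal.toReal_sum]
        · exact Finset.sum_congr rfl fun a _ => by split <;> simp
        · intro a _
          split
          · exact PMF.apply_ne_top _ _
          · exact ENNReal.zero_ne_top
      simp only [this]
      refine continuousOn_finset_sum _ fun a _ => ?_
      split
      · exact ih a
      · exact continuousOn_const
    -- continuity of the point masses of S (ν α) z, by induction on z
    have hSc : ∀ z s : ℕ, ContinuousOn (fun α => ((S (ν α) z) s).toReal) A := by
      intro z
      induction z with
      | zero =>
        intro s
        simp only [hS0]
        exact continuousOn_const
      | succ z ihz =>
        intro s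
        have : ∀ α, ((S (ν α) (z + 1)) s).toReal
            = ∑ t ∈ Finset.range (s + 1), ((S (ν α) z) t).toReal * ((ν α) (s - t)).toReal := by
          intro α
          rw [hSs, bind_add_apply, ENNReal.toReal_sum]
          · exact Finset.sum_congr rfl fun t _ => ENNReal.toReal_mul
          · exact fun t _ => ENNReal.mul_ne_top (PMF.apply_ne_top _ _) (PMF.apply_ne_top _ _)
        simp only [this]
        exact continuousOn_finset_sum _ fun t _ => (ihz t).mul (hνc (s - t))
    -- continuity of the point masses of B α := Z.bind (S (ν α))
    have hBc : ∀ s : ℕ, ContinuousOn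
        (fun α => ((Z.bind fun z => S (ν α) z) s).toReal) A := by
      intro s
      have heq : ∀ α, ((Z.bind fun z => S (ν α) z) s).toReal
          = ∑' z : ℕ, (Z z).toReal * ((S (ν α) z) s).toReal := by
        intro α
        rw [PMF.bind_apply, ENNReal.tsum_toReal_eq]
        · exact tsum_congr fun z => ENNReal.toReal_mul
        · exact fun z => ENNReal.mul_ne_top (PMF.apply_ne_top _ _) (PMF.apply_ne_top _ _)
      simp only [heq]
      refine continuousOn_tsum (u := fun z => (Z z).toReal)
        (fun z => (continuousOn_const.mul (hSc z s))) ?_ ?_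
      · exact ENNReal.summable_toReal (by simp [Z.tsum_coe])
      · intro z α _
        rw [Real.norm_eq_abs, abs_of_nonneg (by positivity)]
        calc (Z z).toReal * ((S (ν α) z) s).toReal
            ≤ (Z z).toReal * 1 := by
              refine mul_le_mul_of_nonneg_left ?_ ENNReal.toReal_nonneg
              exact ENNReal.toReal_le_of_le_ofReal zero_le_one
                (by simpa using (S (ν α) z).coe_le_one s)
          _ = (Z z).toReal := mul_one _
    -- finally, the recursion for μ
    intro k
    have : ∀ α, ((μ α (n + 1)) k).toReal
        = ∑ e ∈ Finset.range (k + 1),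
            ((η α) e).toReal * ((Z.bind fun z => S (ν α) z) (k - e)).toReal := by
      intro α
      rw [hμs, bind_add_apply, ENNReal.toReal_sum]
      · exact Finset.sum_congr rfl fun e _ => ENNReal.toReal_mul
      · exact fun e _ => ENNReal.mul_ne_top (PMF.apply_ne_top _ _) (PMF.apply_ne_top _ _)
    simp only [this]
    exact continuousOn_finset_sum _ fun e _ => (hη e).mul (hBc (k - e))
end

section
/- Let d ≥ 2 be an integer and 0 < p < 1 a real number. Let η be the PMF on ℕ with η(2) = p, η(0) = 1 − p, and η(k) = 0 otherwise. Let S : PMF ℕ → ℕ → PMF ℕ satisfy S ν 0 = pure 0 and S ν (z+1) = (S ν z).bind (fun t => ν.bind (fun x => pure (t + x))) for all ν and z. Suppose μ is a PMF on ℕ satisfying the fixed-point equation μ = η.bind (fun e => (S (μ.map (fun x => x − 1)) d).bind (fun s => pure (e + s))), where x − 1 is truncated subtraction on ℕ. Then μ(0) > 0. -/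
open scoped ENNReal

private lemma aux_shift (w : PMF ℕ) (e n : ℕ) :
    (w.bind fun s => PMF.pure (e + s)) n = if e ≤ n then w (n - e) else 0 := by
  rw [PMF.bind_apply]
  split_ifs with h
  · rw [tsum_eq_single (n - e)]
    · simp [PMF.pure_apply, Nat.add_sub_cancel' h]
    · intro s hs
      have : n ≠ e + s := by omega
      simp [PMF.pure_apply, this]
  · apply ENNReal.tsum_eq_zero.mpr
    intro s
    have : n ≠ e + s := by omega
    simp [PMF.pure_apply, this]

private lemma aux_Sval (S : PMF ℕ → ℕ → PMF ℕ)
    (hSs : ∀ (ν : PMF ℕ) (z : ℕ),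
      S ν (z + 1) = (S ν z).bind (fun t => ν.bind (fun x => PMF.pure (t + x))))
    (ν : PMF ℕ) (z n : ℕ) :
    S ν (z + 1) n = ∑' t, S ν z t * (if t ≤ n then ν (n - t) else 0) := by
  rw [hSs, PMF.bind_apply]
  exact tsum_congr fun t => by rw [aux_shift]

private lemma aux_S1 (S : PMF ℕ → ℕ → PMF ℕ)
    (hS0 : ∀ ν : PMF ℕ, S ν 0 = PMF.pure 0)
    (hSs : ∀ (ν : PMF ℕ) (z : ℕ),
      S ν (z + 1) = (S ν z).bind (fun t => ν.bind (fun x => PMF.pure (t + x))))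
    (ν : PMF ℕ) (n : ℕ) : S ν 1 n = ν n := by
  rw [aux_Sval S hSs, tsum_eq_single 0]
  · simp [hS0, PMF.pure_apply]
  · intro t ht
    simp [hS0, PMF.pure_apply, ht]

private lemma aux_Szero (S : PMF ℕ → ℕ → PMF ℕ)
    (hSs : ∀ (ν : PMF ℕ) (z : ℕ),
      S ν (z + 1) = (S ν z).bind (fun t => ν.bind (fun x => PMF.pure (t + x))))
    (ν : PMF ℕ) (M : ℕ) (hM : ∀ j, j < M → ν j = 0) :
    ∀ z s, s < z * M → S ν z s = 0 := by
  intro z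
  induction z with
  | zero => intro s hs; omega
  | succ z ih =>
    intro s hs
    rw [aux_Sval S hSs]
    rw [ENNReal.tsum_eq_zero]
    intro t
    by_cases ht : t < z * M
    · rw [ih t ht, zero_mul]
    · by_cases hts : t ≤ s
      · have hexp : (z + 1) * M = z * M + M := by ring
        have hnt : s - t < M := by omega
        rw [if_pos hts, hM _ hnt, mul_zero]
      · rw [if_neg hts, mul_zero]

private lemma aux_Spow (S : PMF ℕ → ℕ → PMF ℕ)
    (hS0 : ∀ ν : PMF ℕ, S ν 0 = PMF.pure 0)
    (hSs : ∀ (ν : PMF ℕ) (z : ℕ),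
      S ν (z + 1) = (S ν z).bind (fun t => ν.bind (fun x => PMF.pure (t + x))))
    (ν : PMF ℕ) : ∀ z, ν 0 ^ z ≤ S ν z 0 := by
  intro z
  induction z with
  | zero => simp [hS0, PMF.pure_apply]
  | succ z ih =>
    rw [aux_Sval S hSs]
    calc ν 0 ^ (z + 1) = ν 0 ^ z * ν 0 := pow_succ _ _
    _ ≤ S ν z 0 * (if (0:ℕ) ≤ 0 then ν (0 - 0) else 0) := by
        simp only [if_pos (le_refl 0), Nat.sub_zero]
        exact mul_le_mul_left ih _
    _ ≤ ∑' t, S ν z t * (if t ≤ 0 then ν (0 - t) else 0) := ENNReal.le_tsum 0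

/-- Discontinuity core for Bernoulli parking on the `d`-ary tree: any PMF `μ`
on ℕ solving the fixed-point equation `X = η_ρ + ∑_{i=1}^d (X^{(i)} - 1)^+`
(with arrivals 2 w.p. `p`, 0 w.p. `1-p`) puts positive mass at 0. -/
theorem stmt_17 (d : ℕ) (hd : 2 ≤ d) (p : ℝ) (hp0 : 0 < p) (hp1 : p < 1)
    (η : PMF ℕ)
    (hη2 : η 2 = ENNReal.ofReal p) (hη0 : η 0 = ENNReal.ofReal (1 - p))
    (hηother : ∀ k : ℕ, k ≠ 0 → k ≠ 2 → η k = 0)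
    (S : PMF ℕ → ℕ → PMF ℕ)
    (hS0 : ∀ ν : PMF ℕ, S ν 0 = PMF.pure 0)
    (hSs : ∀ (ν : PMF ℕ) (z : ℕ),
      S ν (z + 1) = (S ν z).bind (fun t => ν.bind (fun x => PMF.pure (t + x))))
    (μ : PMF ℕ)
    (hfix : μ = η.bind (fun e =>
      (S (μ.map (fun x => x - 1)) d).bind (fun s => PMF.pure (e + s)))) :
    0 < μ 0 := by
  set ν : PMF ℕ := μ.map (fun x => x - 1) with hν
  -- value of μ at any point
  have hμval : ∀ n : ℕ, μ n = ENNReal.ofReal (1 - p) * S ν d n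
      + ENNReal.ofReal p * (if 2 ≤ n then S ν d (n - 2) else 0) := by
    intro n
    conv_lhs => rw [hfix]
    rw [PMF.bind_apply]
    rw [tsum_eq_sum (s := ({0, 2} : Finset ℕ))
      (fun e he => by
        have h0 : e ≠ 0 := fun h => he (by simp [h])
        have h2 : e ≠ 2 := fun h => he (by simp [h])
        rw [hηother e h0 h2, zero_mul])]
    rw [Finset.sum_insert (by simp), Finset.sum_singleton]
    rw [aux_shift, aux_shift, hη0, hη2]
    simp
  -- values of ν
  have hνval : ∀ j : ℕ, ν j = ∑' x : ℕ, if j = x - 1 then μ x else 0 := by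
    intro j
    rw [hν, PMF.map_apply]
    exact tsum_congr fun x => by congr
  by_contra hcon
  push_neg at hcon
  have hμ0 : μ 0 = 0 := le_antisymm hcon zero_le
  -- there is a least m with μ m ≠ 0
  have hex : ∃ n, μ n ≠ 0 := by
    by_contra hall
    push_neg at hall
    have := μ.tsum_coe
    rw [ENNReal.tsum_eq_zero.mpr hall] at this
    exact one_ne_zero this.symm
  classical
  obtain ⟨m, hμm, hlt⟩ : ∃ m, μ m ≠ 0 ∧ ∀ k, k < m → μ k = 0 :=
    ⟨Nat.find hex, Nat.find_spec hex, fun k hk => by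
      have := Nat.find_min hex hk
      push_neg at this
      exact this⟩
  have hm1 : 1 ≤ m := by
    rcases Nat.eq_zero_or_pos m with h | h
    · exact absurd (h ▸ hμ0) hμm
    · exact h
  have h1p : ENNReal.ofReal (1 - p) ≠ 0 := by
    simp [ENNReal.ofReal_eq_zero]; linarith
  -- case m = 1
  rcases Nat.lt_or_ge m 2 with hm2 | hm2
  · -- m = 1
    have hmeq : m = 1 := by omega
    have hν0 : μ 1 ≤ ν 0 := by
      rw [hνval]
      have : μ 1 = (if (0:ℕ) = 1 - 1 then μ 1 else 0) := by simp
      rw [this]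
      exact ENNReal.le_tsum 1
    have hS0pos : S ν d 0 ≠ 0 := by
      intro h
      have := aux_Spow S hS0 hSs ν d
      rw [h] at this
      have hν0' : ν 0 ≠ 0 := by
        intro hz
        rw [hz] at hν0
        exact hμm (hmeq ▸ le_antisymm hν0 zero_le)
      exact (pow_ne_zero d hν0') (le_antisymm this zero_le)
    have := hμval 0
    rw [hμ0] at this
    simp only [show ¬ (2 ≤ 0) by omega, if_false, mul_zero, add_zero] at this
    exact hS0pos (by
      rcases mul_eq_zero.mp this.symm with h | h
      · exact absurd h h1p
      · exact h)
  · -- m ≥ 2 : all ν j = 0 for j < m - 1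
    have hνlt : ∀ j, j < m - 1 → ν j = 0 := by
      intro j hj
      rw [hνval, ENNReal.tsum_eq_zero]
      intro x
      split_ifs with h
      · exact hlt x (by omega)
      · rfl
    rcases Nat.lt_or_ge m (d * (m - 1)) with hcase | hcase
    · -- strict: μ m = 0, contradiction
      have h1 : S ν d m = 0 := aux_Szero S hSs ν (m - 1) hνlt d m hcase
      have h2 : S ν d (m - 2) = 0 :=
        aux_Szero S hSs ν (m - 1) hνlt d (m - 2) (by omega)
      have := hμval m
      rw [h1, h2] at this
      simp at this
      exact hμm this
    · -- d * (m-1) ≤ m forces d = 2, m = 2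
      have h2m : 2 * (m - 1) ≤ d * (m - 1) := Nat.mul_le_mul_right _ hd
      have hmeq : m = 2 := by omega
      have hdeq : d = 2 := by
        have hdd : d * (m - 1) = d := by simp [hmeq]
        omega
      subst hmeq; subst hdeq
      -- now ν 0 = 0, ν 1 = μ 2, S ν 2 2 = ν 1 * ν 1, S ν 2 0 = 0
      have hν0 : ν 0 = 0 := hνlt 0 (by omega)
      have hν1 : ν 1 = μ 2 := by
        rw [hνval, tsum_eq_single 2]
        · simp
        · intro x hx
          have : ¬ (1 = x - 1) := by omega
          rw [if_neg this]
      have hS20 : S ν 2 0 = 0 := aux_Szero S hSs ν 1 hνlt 2 0 (by omega)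
      have hS22 : S ν 2 2 = ν 1 * ν 1 := by
        rw [aux_Sval S hSs, tsum_eq_single 1]
        · rw [aux_S1 S hS0 hSs]
          norm_num
        · intro t ht
          rw [aux_S1 S hS0 hSs]
          rcases t with _ | _ | _ | t
          · rw [hν0, zero_mul]
          · exact absurd rfl ht
          · simp [hν0]
          · rw [if_neg (by omega), mul_zero]
      have hkey : μ 2 = ENNReal.ofReal (1 - p) * (μ 2 * μ 2) := by
        have := hμval 2
        rw [hS22, hν1, hS20] at this
        simpa using this
      have hlt1 : ENNReal.ofReal (1 - p) < 1 := by
        rw [← ENNReal.ofReal_one]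
        exact ENNReal.ofReal_lt_ofReal_iff_of_nonneg (by linarith) |>.mpr (by linarith)
      have hle : ENNReal.ofReal (1 - p) * (μ 2 * μ 2) ≤ ENNReal.ofReal (1 - p) * μ 2 := by
        calc ENNReal.ofReal (1 - p) * (μ 2 * μ 2)
            = (ENNReal.ofReal (1 - p) * μ 2) * μ 2 := by ring
          _ ≤ (ENNReal.ofReal (1 - p) * μ 2) * 1 := mul_le_mul_right (μ.coe_le_one 2) _
          _ = ENNReal.ofReal (1 - p) * μ 2 := mul_one _
      have hlt' : ENNReal.ofReal (1 - p) * μ 2 < 1 * μ 2 :=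
        ENNReal.mul_lt_mul_left hμm (μ.apply_ne_top 2) hlt1
      rw [one_mul] at hlt'
      have hcontra : ENNReal.ofReal (1 - p) * (μ 2 * μ 2) < μ 2 := lt_of_le_of_lt hle hlt'
      rw [← hkey] at hcontra
      exact lt_irrefl _ hcontra
end

section
/- Let S : PMF ℕ → ℕ → PMF ℕ satisfy S ν 0 = pure 0 and S ν (z+1) = (S ν z).bind (fun t => ν.bind (fun x => pure (t + x))) for all ν and z. Let Z and η be PMFs on ℕ whose means λ = ∑'_{z} z·Z(z) and α = ∑'_{k} k·η(k) are finite with λ > 1. Suppose μ is a PMF on ℕ satisfying the fixed-point equation μ = η.bind (fun e => (Z.bind (fun z => S (μ.map (fun x => x − 1)) z)).bind (fun s => pure (e + s))), where x − 1 is truncated subtraction on ℕ, and suppose m = ∑'_{k} k·μ(k) is finite. Then, as real numbers, m = (λ − α − λ·(μ(0)).toReal)/(λ − 1). -/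
open scoped ENNReal

noncomputable def pmean (ν : PMF ℕ) : ℝ≥0∞ := ∑' k : ℕ, (k : ℝ≥0∞) * ν k

lemma pmean_bind (p : PMF ℕ) (f : ℕ → PMF ℕ) :
    pmean (p.bind f) = ∑' a : ℕ, p a * pmean (f a) := by
  unfold pmean
  simp only [PMF.bind_apply, ← ENNReal.tsum_mul_left]
  rw [ENNReal.tsum_comm]
  exact tsum_congr fun a => tsum_congr fun k => by ring

lemma pmean_pure (n : ℕ) : pmean (PMF.pure n) = n := by
  unfold pmean
  rw [tsum_eq_single n]
  · simp
  · intro b hb; simp [PMF.pure_apply, hb]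

lemma pmean_shift (p : PMF ℕ) (e : ℕ) :
    pmean (p.bind fun s => PMF.pure (e + s)) = e + pmean p := by
  rw [pmean_bind]
  simp only [pmean_pure, Nat.cast_add]
  have h : ∀ s : ℕ, p s * ((e : ℝ≥0∞) + s) = p s * e + (s : ℝ≥0∞) * p s :=
    fun s => by ring
  simp_rw [h]
  rw [ENNReal.tsum_add, ENNReal.tsum_mul_right, PMF.tsum_coe, one_mul]
  rfl

lemma pmean_map (f : ℕ → ℕ) (p : PMF ℕ) :
    pmean (p.map f) = ∑' x : ℕ, (f x : ℝ≥0∞) * p x := by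
  rw [PMF.map, pmean_bind]
  exact tsum_congr fun x => by simp [pmean_pure, mul_comm]

/-- Expectation formula `E[X] = (λ - α - λ P(X=0))/(λ - 1)` for the parking
process on a supercritical Galton–Watson tree: if `μ` is the law of the total
number of cars arriving at the root, satisfying the recursive distributional
equation, and has finite mean `m`, then `m = (λ - α - λ μ(0))/(λ - 1)`. -/
theorem stmt_18 (S : PMF ℕ → ℕ → PMF ℕ)
    (hS0 : ∀ ν : PMF ℕ, S ν 0 = PMF.pure 0)
    (hSs : ∀ (ν : PMF ℕ) (z : ℕ),
      S ν (z + 1) = (S ν z).bind (fun t => ν.bind (fun x => PMF.pure (t + x))))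
    (Z η : PMF ℕ) (lam α : ℝ≥0∞)
    (hlam : lam = ∑' z : ℕ, (z : ℝ≥0∞) * Z z)
    (hα : α = ∑' k : ℕ, (k : ℝ≥0∞) * η k)
    (hlamfin : lam < ⊤) (hαfin : α < ⊤) (hlamgt : 1 < lam)
    (μ : PMF ℕ)
    (hfix : μ = η.bind (fun e =>
      (Z.bind (fun z => S (μ.map (fun x => x - 1)) z)).bind
        (fun s => PMF.pure (e + s))))
    (m : ℝ≥0∞) (hm : m = ∑' k : ℕ, (k : ℝ≥0∞) * μ k) (hmfin : m < ⊤) :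
    m.toReal = (lam.toReal - α.toReal - lam.toReal * (μ 0).toReal)
      / (lam.toReal - 1) := by
  -- mean of S ν z is z * pmean ν
  have hSmean : ∀ (ν : PMF ℕ) (z : ℕ), pmean (S ν z) = z * pmean ν := by
    intro ν z
    induction z with
    | zero => simp [hS0, pmean_pure]
    | succ n ih =>
      rw [hSs, pmean_bind]
      have h : ∀ t : ℕ, pmean (ν.bind fun x => PMF.pure (t + x)) = t + pmean ν :=
        fun t => pmean_shift ν t
      simp_rw [h]
      have h2 : ∀ t : ℕ, S ν n t * ((t : ℝ≥0∞) + pmean ν)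
          = (t : ℝ≥0∞) * S ν n t + S ν n t * pmean ν := fun t => by ring
      simp_rw [h2]
      rw [ENNReal.tsum_add, ENNReal.tsum_mul_right, PMF.tsum_coe, one_mul]
      have : (∑' t : ℕ, (t : ℝ≥0∞) * S ν n t) = pmean (S ν n) := rfl
      rw [this, ih]
      push_cast
      ring
  set ν' : PMF ℕ := μ.map (fun x => x - 1) with hν'
  set M' : ℝ≥0∞ := pmean ν' with hM'
  have hmμ : m = pmean μ := hm
  -- step equation
  have hZg : pmean (Z.bind fun z => S ν' z) = lam * M' := by
    rw [pmean_bind]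
    simp_rw [hSmean]
    rw [hlam, ← ENNReal.tsum_mul_right]
    exact tsum_congr fun z => by ring
  have hstep : m = α + lam * M' := by
    rw [hmμ]
    conv_lhs => rw [hfix]
    rw [pmean_bind]
    have h : ∀ e : ℕ, pmean ((Z.bind fun z => S ν' z).bind
        (fun s => PMF.pure (e + s))) = e + lam * M' := by
      intro e
      rw [pmean_shift, hZg]
    simp_rw [h]
    have h2 : ∀ e : ℕ, η e * ((e : ℝ≥0∞) + lam * M')
        = (e : ℝ≥0∞) * η e + η e * (lam * M') := fun e => by ring
    simp_rw [h2]
    rw [ENNReal.tsum_add, ENNReal.tsum_mul_right, PMF.tsum_coe, one_mul, hα]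
  -- decomposition m = M' + B
  set B : ℝ≥0∞ := ∑' x : ℕ, (if x = 0 then 0 else μ x) with hB
  have hM'eq : M' = ∑' x : ℕ, ((x - 1 : ℕ) : ℝ≥0∞) * μ x := pmean_map _ μ
  have hsplit : m = M' + B := by
    rw [hm, hM'eq, hB, ← ENNReal.tsum_add]
    refine tsum_congr fun x => ?_
    rcases x with _ | k
    · simp
    · simp only [Nat.succ_sub_one, Nat.succ_ne_zero, if_false]
      push_cast
      ring
  have hone : (1 : ℝ≥0∞) = μ 0 + B := by
    rw [hB, ← PMF.tsum_coe μ]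
    have h := ENNReal.tsum_eq_add_tsum_ite (f := fun x => μ x) 0
    rw [h]
    congr 1
    exact tsum_congr fun x => by split_ifs <;> rfl
  -- finiteness
  have hM'le : M' ≤ m := by
    rw [hm, hM'eq]
    refine ENNReal.tsum_le_tsum fun x => mul_le_mul_left ?_ _
    exact_mod_cast Nat.sub_le x 1
  have hM'fin : M' ≠ ⊤ := (lt_of_le_of_lt hM'le hmfin).ne
  have hBle : B ≤ 1 := by
    rw [hB, ← PMF.tsum_coe μ]
    refine ENNReal.tsum_le_tsum fun x => ?_
    split <;> simp
  have hBfin : B ≠ ⊤ := (lt_of_le_of_lt hBle ENNReal.one_lt_top).ne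
  have hμ0fin : μ 0 ≠ ⊤ := (μ.apply_lt_top 0).ne
  have hlamne : lam ≠ ⊤ := hlamfin.ne
  have hαne : α ≠ ⊤ := hαfin.ne
  -- to reals
  set L := lam.toReal
  set A := α.toReal
  set Mr := m.toReal
  set M'r := M'.toReal
  set Br := B.toReal
  set P := (μ 0).toReal
  have e1 : Mr = A + L * M'r := by
    have := congrArg ENNReal.toReal hstep
    rwa [ENNReal.toReal_add hαne (ENNReal.mul_ne_top hlamne hM'fin),
      ENNReal.toReal_mul] at this
  have e2 : Mr = M'r + Br := by
    have := congrArg ENNReal.toReal hsplit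
    rwa [ENNReal.toReal_add hM'fin hBfin] at this
  have e3 : (1 : ℝ) = P + Br := by
    have := congrArg ENNReal.toReal hone
    rwa [ENNReal.toReal_one, ENNReal.toReal_add hμ0fin hBfin] at this
  have hL : 1 < L := by
    have := ENNReal.toReal_strict_mono hlamne hlamgt
    simpa using this
  have hM'r : M'r = Mr - 1 + P := by linarith
  rw [eq_div_iff (by linarith : L - 1 ≠ 0)]
  linear_combination -e1 - L * hM'r
end
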